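/- Let Θ_∞(w) = inf{ Σ_{S⊆V} α_S F(S) : α_S ≥ 0 for all S ⊆ V, Σ_{S⊆V} α_S = 1, Σ_{S : i∈S} α_S ≥ |w_i| for all i ∈ V }. Then Θ_∞ is the convex envelope of w ↦ F(supp(w)) over the unit ℓ_∞-ball B = {w ∈ ℝ^V : ‖w‖_∞ ≤ 1}; precisely: (i) Θ_∞ is convex on B; (ii) Θ_∞(w) ≤ F(supp(w)) for every w ∈ B; (iii) every function g : ℝ^V → ℝ that is convex on B and satisfies g(w) ≤ F(supp(w)) for all w ∈ B also satisfies g(w) ≤ Θ_∞(w) for all w ∈ B. -/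

import Mathlib

open scoped BigOperators

/-- Support of a vector as a finset. -/
noncomputable def vsupp {V : Type*} [Fintype V] (w : V → ℝ) : Finset V :=
  Finset.univ.filter (fun i => w i ≠ 0)

/-- The non-homogeneous `ℓ∞`-relaxation `Θ_∞`. -/
noncomputable def thetaInf {V : Type*} [Fintype V] [DecidableEq V] (F : Finset V → ℝ) (w : V → ℝ) : ℝ :=
  sInf { t : ℝ | ∃ α : Finset V → ℝ,
    (∀ S, 0 ≤ α S) ∧ (∑ S : Finset V, α S) = 1 ∧
    (∀ i : V, |w i| ≤ ∑ S : Finset V, if i ∈ S then α S else 0) ∧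
    t = ∑ S : Finset V, α S * F S }

section Aux

variable {V : Type*} [Fintype V] [DecidableEq V]

/-- The feasible value set. -/
def feas (F : Finset V → ℝ) (w : V → ℝ) : Set ℝ :=
  { t : ℝ | ∃ α : Finset V → ℝ,
    (∀ S, 0 ≤ α S) ∧ (∑ S : Finset V, α S) = 1 ∧
    (∀ i : V, |w i| ≤ ∑ S : Finset V, if i ∈ S then α S else 0) ∧
    t = ∑ S : Finset V, α S * F S }

lemma thetaInf_eq (F : Finset V → ℝ) (w : V → ℝ) : thetaInf F w = sInf (feas F w) := rfl

lemma feas_bddBelow (F : Finset V → ℝ) (hFnn : ∀ S, 0 ≤ F S) (w : V → ℝ) :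
    BddBelow (feas F w) := by
  refine ⟨0, fun t ht => ?_⟩
  obtain ⟨α, h0, -, -, ht⟩ := ht
  rw [ht]
  exact Finset.sum_nonneg fun S _ => mul_nonneg (h0 S) (hFnn S)

lemma mem_feas_supp (F : Finset V → ℝ) (w : V → ℝ) (hw : ∀ i, |w i| ≤ 1) :
    F (vsupp w) ∈ feas F w := by
  refine ⟨fun S => if S = vsupp w then 1 else 0, fun S => by positivity, ?_, ?_, ?_⟩
  · simp
  · intro i
    have : (∑ S : Finset V, if i ∈ S then (if S = vsupp w then (1:ℝ) else 0) else 0)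
        = if i ∈ vsupp w then 1 else 0 := by
      rw [Finset.sum_eq_single (vsupp w)]
      · simp
      · intro S _ hS; simp [hS]
      · simp
    rw [this]
    by_cases h : i ∈ vsupp w
    · simpa [h] using hw i
    · have : w i = 0 := by simpa [vsupp] using h
      simp [h, this]
  · rw [Finset.sum_eq_single (vsupp w)]
    · simp
    · intro S _ hS; simp [hS]
    · simp

end Aux

theorem stmt_0 {V : Type*} [Fintype V] [DecidableEq V]
    (F : Finset V → ℝ) (hF0 : F ∅ = 0) (hFpos : ∀ A : Finset V, A.Nonempty → 0 < F A)
    (B : Set (V → ℝ)) (hB : B = { w : V → ℝ | ∀ i, |w i| ≤ 1 }) :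
    ConvexOn ℝ B (thetaInf F) ∧
    (∀ w ∈ B, thetaInf F w ≤ F (vsupp w)) ∧
    (∀ g : (V → ℝ) → ℝ, ConvexOn ℝ B g → (∀ w ∈ B, g w ≤ F (vsupp w)) →
      ∀ w ∈ B, g w ≤ thetaInf F w) := by
  have hFnn : ∀ S : Finset V, 0 ≤ F S := by
    intro S
    rcases S.eq_empty_or_nonempty with h | h
    · simp [h, hF0]
    · exact (hFpos S h).le
  have hBconv : Convex ℝ B := by
    subst hB
    intro x hx y hy a b ha hb hab i
    calc |a * x i + b * y i| ≤ |a * x i| + |b * y i| := abs_add_le _ _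
      _ = a * |x i| + b * |y i| := by rw [abs_mul, abs_mul, abs_of_nonneg ha, abs_of_nonneg hb]
      _ ≤ a * 1 + b * 1 := by
          gcongr
          · exact hx i
          · exact hy i
      _ = 1 := by linarith
  -- part (ii)
  have part2 : ∀ w ∈ B, thetaInf F w ≤ F (vsupp w) := by
    intro w hw
    rw [thetaInf_eq]
    exact csInf_le (feas_bddBelow F hFnn w) (mem_feas_supp F w (by rwa [hB] at hw))
  -- key combination lemma for convexity
  have hcomb : ∀ x ∈ B, ∀ y ∈ B, ∀ a b : ℝ, 0 ≤ a → 0 ≤ b → a + b = 1 →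
      ∀ t₁ ∈ feas F x, ∀ t₂ ∈ feas F y, thetaInf F (a • x + b • y) ≤ a * t₁ + b * t₂ := by
    intro x hx y hy a b ha hb hab t₁ ht₁ t₂ ht₂
    obtain ⟨α, hα0, hα1, hαc, hαt⟩ := ht₁
    obtain ⟨β, hβ0, hβ1, hβc, hβt⟩ := ht₂
    rw [thetaInf_eq]
    refine csInf_le (feas_bddBelow F hFnn _) ⟨fun S => a * α S + b * β S, ?_, ?_, ?_, ?_⟩
    · intro S; exact add_nonneg (mul_nonneg ha (hα0 S)) (mul_nonneg hb (hβ0 S))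
    · rw [Finset.sum_add_distrib, ← Finset.mul_sum, ← Finset.mul_sum, hα1, hβ1]; linarith
    · intro i
      have h1 : ∀ S : Finset V, (if i ∈ S then a * α S + b * β S else 0)
          = a * (if i ∈ S then α S else 0) + b * (if i ∈ S then β S else 0) := by
        intro S; split <;> simp
      calc |(a • x + b • y) i| = |a * x i + b * y i| := rfl
        _ ≤ a * |x i| + b * |y i| := by
            refine (abs_add_le _ _).trans ?_
            rw [abs_mul, abs_mul, abs_of_nonneg ha, abs_of_nonneg hb]
        _ ≤ a * (∑ S : Finset V, if i ∈ S then α S else 0)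
            + b * (∑ S : Finset V, if i ∈ S then β S else 0) := by
            gcongr
            · exact hαc i
            · exact hβc i
        _ = ∑ S : Finset V, (if i ∈ S then a * α S + b * β S else 0) := by
            simp only [h1, Finset.sum_add_distrib, Finset.mul_sum]
    · rw [hαt, hβt, Finset.mul_sum, Finset.mul_sum, ← Finset.sum_add_distrib]
      congr 1; ext S; ring
  have part1 : ConvexOn ℝ B (thetaInf F) := by
    refine ⟨hBconv, ?_⟩
    intro x hx y hy a b ha hb hab
    have hnex : (feas F x).Nonempty := ⟨_, mem_feas_supp F x (by rwa [hB] at hx)⟩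
    have hney : (feas F y).Nonempty := ⟨_, mem_feas_supp F y (by rwa [hB] at hy)⟩
    rcases eq_or_lt_of_le ha with rfl | ha'
    · simp only [zero_smul, zero_add] at *
      have hb1 : b = 1 := by linarith
      subst hb1
      simp [smul_eq_mul]
    rcases eq_or_lt_of_le hb with rfl | hb'
    · simp only [zero_smul, add_zero] at *
      have ha1 : a = 1 := by linarith
      subst ha1
      simp [smul_eq_mul]
    -- a, b > 0
    have key : ∀ t₁ ∈ feas F x, ∀ t₂ ∈ feas F y,
        thetaInf F (a • x + b • y) ≤ a * t₁ + b * t₂ :=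
      hcomb x hx y hy a b ha hb hab
    have step1 : ∀ t₂ ∈ feas F y, thetaInf F (a • x + b • y) ≤ a * sInf (feas F x) + b * t₂ := by
      intro t₂ ht₂
      have : (thetaInf F (a • x + b • y) - b * t₂) / a ≤ sInf (feas F x) := by
        refine le_csInf hnex fun t₁ ht₁ => ?_
        rw [div_le_iff₀ ha']
        have := key t₁ ht₁ t₂ ht₂
        linarith [mul_comm t₁ a]
      rw [div_le_iff₀ ha'] at this
      linarith [mul_comm (sInf (feas F x)) a]
    have : (thetaInf F (a • x + b • y) - a * sInf (feas F x)) / b ≤ sInf (feas F y) := by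
      refine le_csInf hney fun t₂ ht₂ => ?_
      rw [div_le_iff₀ hb']
      have := step1 t₂ ht₂
      linarith [mul_comm t₂ b]
    rw [div_le_iff₀ hb'] at this
    simp only [smul_eq_mul, thetaInf_eq]
    rw [thetaInf_eq] at this
    linarith [mul_comm (sInf (feas F y)) b]
  refine ⟨part1, part2, ?_⟩
  -- part (iii)
  intro g hg hgle w hwB
  have hw : ∀ i, |w i| ≤ 1 := by rwa [hB] at hwB
  rw [thetaInf_eq]
  refine le_csInf ⟨_, mem_feas_supp F w hw⟩ ?_
  rintro t ⟨α, hα0, hα1, hαc, ht⟩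
  -- the denominators
  set D : V → ℝ := fun i => ∑ S : Finset V, if i ∈ S then α S else 0 with hD
  have hD0 : ∀ i, 0 ≤ D i := fun i =>
    Finset.sum_nonneg fun S _ => by split <;> [exact hα0 S; rfl]
  have hwD : ∀ i, |w i| ≤ D i := hαc
  -- the decomposition points
  set v : Finset V → V → ℝ := fun S i => if i ∈ S then w i / D i else 0 with hv
  have hvB : ∀ S, v S ∈ B := by
    intro S
    rw [hB]
    intro i
    simp only [hv]
    split
    · rcases eq_or_lt_of_le (hD0 i) with h | h
      · have : w i = 0 := by
          have := hwD i; rw [← h] at this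
          exact abs_eq_zero.mp (le_antisymm this (abs_nonneg _))
        simp [this]
      · rw [abs_div, abs_of_pos h, div_le_one h]
        exact hwD i
    · simp
  -- w is the convex combination of the v S with weights α
  have hwe : w = ∑ S : Finset V, α S • v S := by
    funext i
    have h1 : ∀ S : Finset V, (α S • v S) i = (w i / D i) * (if i ∈ S then α S else 0) := by
      intro S
      simp only [hv, Pi.smul_apply, smul_eq_mul]
      split <;> ring
    rw [Finset.sum_apply]
    simp only [h1, ← Finset.mul_sum, ← hD]
    rcases eq_or_lt_of_le (hD0 i) with h | h
    · have : w i = 0 := by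
        have := hwD i; rw [← h] at this
        exact abs_eq_zero.mp (le_antisymm this (abs_nonneg _))
      simp [this]
    · field_simp; rfl
  -- g (v S) ≤ F S for every S
  have hgv : ∀ S : Finset V, g (v S) ≤ F S := by
    intro S
    set e : V → ℝ := fun i => if i ∈ S ∧ w i = 0 then (1/2 : ℝ) else 0 with he
    have hDi : ∀ i ∈ S, w i ≠ 0 → 0 < D i := fun i _ hwi =>
      lt_of_lt_of_le (abs_pos.mpr hwi) (hwD i)
    have hmemp : v S + e ∈ B := by
      rw [hB]; intro i
      simp only [hv, he, Pi.add_apply]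
      by_cases hiS : i ∈ S
      · by_cases hwi : w i = 0
        · simp only [hiS, hwi, and_self, if_true, div_eq_mul_inv, zero_mul, zero_add]
          rw [one_mul, abs_of_nonneg (by norm_num : (0:ℝ) ≤ 2⁻¹)]; norm_num
        · have hDp := hDi i hiS hwi
          simp only [hiS, if_true, hwi, and_false, if_false, add_zero]
          rw [abs_div, abs_of_pos hDp, div_le_one hDp]; exact hwD i
      · simp [hiS]
    have hmemm : v S - e ∈ B := by
      rw [hB]; intro i
      simp only [hv, he, Pi.sub_apply]
      by_cases hiS : i ∈ S
      · by_cases hwi : w i = 0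
        · simp only [hiS, hwi, and_self, if_true, div_eq_mul_inv, zero_mul, zero_sub]
          rw [abs_neg, one_mul, abs_of_nonneg (by norm_num : (0:ℝ) ≤ 2⁻¹)]; norm_num
        · have hDp := hDi i hiS hwi
          simp only [hiS, if_true, hwi, and_false, if_false, sub_zero]
          rw [abs_div, abs_of_pos hDp, div_le_one hDp]; exact hwD i
      · simp [hiS]
    have hsp : vsupp (v S + e) = S := by
      ext i
      simp only [vsupp, Finset.mem_filter, Finset.mem_univ, true_and, Pi.add_apply, hv, he]
      by_cases hiS : i ∈ S
      · by_cases hwi : w i = 0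
        · simp only [hiS, hwi, and_self, if_true]; norm_num
        · have hDp := (hDi i hiS hwi).ne'
          simp only [hiS, if_true, hwi, and_false, if_false, add_zero]
          simp [div_ne_zero hwi hDp, hiS]
      · simp [hiS]
    have hsm : vsupp (v S - e) = S := by
      ext i
      simp only [vsupp, Finset.mem_filter, Finset.mem_univ, true_and, Pi.sub_apply, hv, he]
      by_cases hiS : i ∈ S
      · by_cases hwi : w i = 0
        · simp only [hiS, hwi, and_self, if_true]; norm_num
        · have hDp := (hDi i hiS hwi).ne'
          simp only [hiS, if_true, hwi, and_false, if_false, sub_zero]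
          simp [div_ne_zero hwi hDp, hiS]
      · simp [hiS]
    have hmid : v S = (1/2 : ℝ) • (v S + e) + (1/2 : ℝ) • (v S - e) := by
      funext i
      simp only [Pi.add_apply, Pi.sub_apply, Pi.smul_apply, smul_eq_mul]
      ring
    have hconv := hg.2 hmemp hmemm (by norm_num : (0:ℝ) ≤ 1/2)
      (by norm_num : (0:ℝ) ≤ 1/2) (by norm_num : (1/2 : ℝ) + 1/2 = 1)
    rw [← hmid] at hconv
    have h1 := hgle _ hmemp
    have h2 := hgle _ hmemm
    rw [hsp] at h1
    rw [hsm] at h2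
    calc g (v S) ≤ (1/2 : ℝ) • g (v S + e) + (1/2 : ℝ) • g (v S - e) := hconv
      _ ≤ (1/2 : ℝ) * F S + (1/2 : ℝ) * F S := by
          simp only [smul_eq_mul]; gcongr <;> norm_num
      _ = F S := by ring
  -- Jensen
  have hJ : g w ≤ ∑ S : Finset V, α S • g (v S) := by
    conv_lhs => rw [hwe]
    exact hg.map_sum_le (fun S _ => hα0 S) hα1 (fun S _ => hvB S)
  rw [ht]
  refine hJ.trans ?_
  refine Finset.sum_le_sum fun S _ => ?_
  simpa [smul_eq_mul] using mul_le_mul_of_nonneg_left (hgv S) (hα0 S)
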